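/- Suppose the system of equations t_i t_{i+1} ⋯ t_{i+k} = |Ṽ_i, Ṽ_{i+1}, ..., Ṽ_{i+k}|^{-1}, i ∈ Z/nZ, in positive unknowns t_1,...,t_n (indices mod n) is considered, where all the determinants |Ṽ_i,...,Ṽ_{i+k}| are positive. If gcd(n, k+1) = 1, then this system has a unique solution in positive reals. -/

import Mathlib

section aux

variable (n k : ℕ)

/-- The circulant sum map. -/
noncomputable def sumMap [NeZero n] : (ZMod n → ℝ) →ₗ[ℝ] (ZMod n → ℝ) where
  toFun := fun x i => ∑ j ∈ Finset.range (k + 1), x (i + (j : ZMod n))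
  map_add' := by intro x y; funext i; simp [Finset.sum_add_distrib]
  map_smul' := by intro r x; funext i; simp [Finset.mul_sum]

lemma sumMap_injective [NeZero n] (hgcd : Nat.gcd n (k + 1) = 1) :
    Function.Injective (sumMap n k) := by
  rw [← LinearMap.ker_eq_bot, LinearMap.ker_eq_bot']
  intro x hx
  have hx' : ∀ i : ZMod n, ∑ j ∈ Finset.range (k + 1), x (i + (j : ZMod n)) = 0 :=
    fun i => congrFun hx i
  have hper : ∀ i : ZMod n, x (i + ((k + 1 : ℕ) : ZMod n)) = x i := by
    intro i
    have key1 : ∑ j ∈ Finset.range (k + 2), x (i + (j : ZMod n)) = x i := by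
      rw [Finset.sum_range_succ']
      have : ∀ j, x (i + ((j + 1 : ℕ) : ZMod n)) = x ((i + 1) + (j : ZMod n)) := by
        intro j; push_cast; ring_nf
      simp only [this]
      rw [hx' (i + 1)]
      simp
    have key2 : ∑ j ∈ Finset.range (k + 2), x (i + (j : ZMod n))
        = x (i + ((k + 1 : ℕ) : ZMod n)) := by
      rw [Finset.sum_range_succ, hx' i, zero_add]
    rw [← key1, key2]
  -- x is constant
  have hconst : ∀ i : ZMod n, x i = x 0 := by
    have hmul : ∀ (m : ℕ) (j : ZMod n), x (j + m • ((k + 1 : ℕ) : ZMod n)) = x j := by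
      intro m
      induction m with
      | zero => simp
      | succ m ih =>
        intro j
        have : j + (m + 1) • ((k + 1 : ℕ) : ZMod n)
            = (j + m • ((k + 1 : ℕ) : ZMod n)) + ((k + 1 : ℕ) : ZMod n) := by
          rw [succ_nsmul]; ring
        rw [this, hper, ih]
    intro i
    have hu : IsUnit ((k + 1 : ℕ) : ZMod n) := by
      rw [ZMod.isUnit_iff_coprime]
      exact Nat.coprime_comm.mp hgcd
    obtain ⟨u, hu⟩ := hu
    have : i = ((i * ↑u⁻¹).val : ℕ) • ((k + 1 : ℕ) : ZMod n) := by
      rw [nsmul_eq_mul, ZMod.natCast_val, ZMod.cast_id, ← hu]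
      simp
    calc x i = x (0 + ((i * ↑u⁻¹).val : ℕ) • ((k + 1 : ℕ) : ZMod n)) := by
            rw [zero_add, ← this]
      _ = x 0 := hmul _ _
  -- conclude x 0 = 0
  have h0 := hx' 0
  simp only [hconst, Finset.sum_const, Finset.card_range, nsmul_eq_mul] at h0
  have hx0 : x 0 = 0 := by
    have hne : ((k + 1 : ℕ) : ℝ) ≠ 0 := by positivity
    rcases mul_eq_zero.mp h0 with h | h
    · exact absurd h hne
    · exact h
  funext i
  rw [hconst i, hx0]
  rfl

end aux

/-- Given positive reals `c i` (`i ∈ ℤ/nℤ`), if `gcd(n, k+1) = 1` then the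
system `t_i t_{i+1} ⋯ t_{i+k} = c i` has a unique solution in positive reals. -/
theorem stmt9 (n k : ℕ) (hn : 0 < n) (c : ZMod n → ℝ) (hc : ∀ i, 0 < c i)
    (hgcd : Nat.gcd n (k + 1) = 1) :
    ∃! t : ZMod n → ℝ, (∀ i, 0 < t i) ∧
      ∀ i : ZMod n, ∏ j ∈ Finset.range (k + 1), t (i + (j : ZMod n)) = c i := by
  haveI : NeZero n := ⟨hn.ne'⟩
  have hinj := sumMap_injective n k hgcd
  have hsurj : Function.Surjective (sumMap n k) :=
    (LinearMap.injective_iff_surjective).mp hinj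
  obtain ⟨x, hxeq⟩ := hsurj (fun i => Real.log (c i))
  refine ⟨fun i => Real.exp (x i), ⟨fun i => Real.exp_pos _, ?_⟩, ?_⟩
  · intro i
    rw [← Real.exp_sum]
    have : ∑ j ∈ Finset.range (k + 1), x (i + (j : ZMod n)) = Real.log (c i) :=
      congrFun hxeq i
    rw [this, Real.exp_log (hc i)]
  · rintro s ⟨hspos, hseq⟩
    have hlog : sumMap n k (fun i => Real.log (s i)) = fun i => Real.log (c i) := by
      funext i
      show ∑ j ∈ Finset.range (k + 1), Real.log (s (i + (j : ZMod n))) = Real.log (c i)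
      rw [← Real.log_prod (s := Finset.range (k + 1)) (f := fun j => s (i + (j : ZMod n))) (fun j _ => (hspos _).ne'), hseq i]
    have : (fun i => Real.log (s i)) = x := hinj (hlog.trans hxeq.symm)
    funext i
    have : Real.log (s i) = x i := congrFun this i
    rw [← this, Real.exp_log (hspos i)]
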